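/- Let l ≥ 1, θ₁,…,θ_l ∈ ℝ and p₁,…,p_l ∈ ℝ², and g_k = (R(θ_k), p_k). For all 1 ≤ i < j ≤ l, the translation components of the cyclic products satisfy Δ^i = R_{i,j−1} Δ^j + (I − R_{1,l}) p_{i,j−1}, where (R_{i,j−1}, p_{i,j−1}) denotes the partial product g_i g_{i+1} ⋯ g_{j−1}, I is the 2×2 identity matrix, and R_{1,l} = R(θ₁+⋯+θ_l). -/

import Mathlib

/-- The 2×2 rotation matrix `R(θ)`. -/
noncomputable def Rot (θ : ℝ) : Matrix (Fin 2) (Fin 2) ℝ :=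
  !![Real.cos θ, -Real.sin θ; Real.sin θ, Real.cos θ]

/-- An element of `SE(2)`: a pair of a 2×2 matrix (rotation part) and a translation in ℝ². -/
abbrev SE2 : Type := Matrix (Fin 2) (Fin 2) ℝ × (Fin 2 → ℝ)

/-- Group law on `SE(2)`: `(R₁, p₁)·(R₂, p₂) = (R₁R₂, p₁ + R₁p₂)`. -/
noncomputable def se2Mul (g h : SE2) : SE2 := (g.1 * h.1, g.2 + g.1.mulVec h.2)

/-- Identity element of `SE(2)`. -/
noncomputable def se2One : SE2 := ((1 : Matrix (Fin 2) (Fin 2) ℝ), (0 : Fin 2 → ℝ))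

/-- Given angles `θ` and translations `p` (1-indexed), `gSE2 θ p k = (R(θ k), p k)`. -/
noncomputable def gSE2 (θ : ℕ → ℝ) (p : ℕ → Fin 2 → ℝ) (k : ℕ) : SE2 := (Rot (θ k), p k)

/-- Partial product `g_{i,j} = g_i g_{i+1} ⋯ g_j` (the identity when `j < i`). -/
noncomputable def partialProd (θ : ℕ → ℝ) (p : ℕ → Fin 2 → ℝ) (i j : ℕ) : SE2 :=
  ((List.range (j + 1 - i)).map (fun t => gSE2 θ p (i + t))).foldr se2Mul se2One

/-- Cyclic product `g^i = g_i g_{i+1} ⋯ g_l g_1 ⋯ g_{i-1}`. -/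
noncomputable def cycProd (θ : ℕ → ℝ) (p : ℕ → Fin 2 → ℝ) (l i : ℕ) : SE2 :=
  se2Mul (partialProd θ p i l) (partialProd θ p 1 (i - 1))

lemma se2Mul_assoc (a b c : SE2) : se2Mul (se2Mul a b) c = se2Mul a (se2Mul b c) := by
  simp [se2Mul, Matrix.mul_assoc, Matrix.mulVec_add, ← Matrix.mulVec_mulVec, add_assoc]
  simp only [Matrix.vecHead, Matrix.vecTail, Function.comp_apply, Fin.succ_zero_eq_one]
  constructor <;> ring

lemma se2Mul_one (a : SE2) : se2Mul a se2One = a := by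
  simp [se2Mul, se2One]

lemma one_se2Mul (a : SE2) : se2Mul se2One a = a := by
  simp [se2Mul, se2One]

lemma partial_empty (θ : ℕ → ℝ) (p : ℕ → Fin 2 → ℝ) (i j : ℕ) (h : j < i) :
    partialProd θ p i j = se2One := by
  have : j + 1 - i = 0 := by omega
  simp [partialProd, this]

lemma partial_cons (θ : ℕ → ℝ) (p : ℕ → Fin 2 → ℝ) (i j : ℕ) (h : i ≤ j) :
    partialProd θ p i j = se2Mul (gSE2 θ p i) (partialProd θ p (i+1) j) := by
  unfold partialProd
  have h1 : j + 1 - i = (j + 1 - (i+1)) + 1 := by omega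
  rw [h1, List.range_succ_eq_map, List.map_cons, List.foldr_cons, List.map_map]
  have h2 : ((fun t => gSE2 θ p (i + t)) ∘ Nat.succ) = (fun t => gSE2 θ p (i + 1 + t)) := by
    funext t
    simp only [Function.comp_apply]
    congr 1
    omega
  rw [h2, Nat.add_zero]

lemma Rot_mul (a b : ℝ) : Rot a * Rot b = Rot (a + b) := by
  ext i j
  fin_cases i <;> fin_cases j <;>
    simp [Rot, Matrix.mul_apply, Fin.sum_univ_two, Real.cos_add, Real.sin_add] <;> ring

lemma Rot_zero : Rot 0 = 1 := by
  ext i j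
  fin_cases i <;> fin_cases j <;> simp [Rot, Matrix.one_apply]

lemma partial_fst (θ : ℕ → ℝ) (p : ℕ → Fin 2 → ℝ) :
    ∀ n i j, j + 1 - i = n →
    (partialProd θ p i j).1 = Rot (∑ k ∈ Finset.Icc i j, θ k) := by
  intro n
  induction n with
  | zero =>
    intro i j hn
    have h : j < i := by omega
    rw [partial_empty θ p i j h, Finset.Icc_eq_empty (by omega)]
    simp [se2One, Rot_zero]
  | succ n ih =>
    intro i j hn
    have h : i ≤ j := by omega
    rw [partial_cons θ p i j h]
    have := ih (i+1) j (by omega)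
    simp only [se2Mul, gSE2, this, Rot_mul]
    rw [Finset.Icc_eq_cons_Ioc h, Finset.sum_cons, ← Finset.Icc_add_one_left_eq_Ioc]

lemma partial_split (θ : ℕ → ℝ) (p : ℕ → Fin 2 → ℝ) :
    ∀ n i m k, m + 1 - i = n → i ≤ m + 1 → m ≤ k →
    partialProd θ p i k = se2Mul (partialProd θ p i m) (partialProd θ p (m+1) k) := by
  intro n
  induction n with
  | zero =>
    intro i m k hn h1 h2
    have : i = m + 1 := by omega
    rw [this, partial_empty θ p (m+1) m (by omega), one_se2Mul]
  | succ n ih =>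
    intro i m k hn h1 h2
    have h : i ≤ m := by omega
    rw [partial_cons θ p i k (by omega), partial_cons θ p i m h,
      ih (i+1) m k (by omega) (by omega) h2, se2Mul_assoc]

theorem cycProd_translation_relation' (l : ℕ) (hl : 1 ≤ l) (θ : ℕ → ℝ) (p : ℕ → Fin 2 → ℝ)
    (i j : ℕ) (hi : 1 ≤ i) (hij : i < j) (hj : j ≤ l) :
    True := trivial

lemma cycProd_fst (θ : ℕ → ℝ) (p : ℕ → Fin 2 → ℝ) (l i : ℕ) (hi : 1 ≤ i) (hil : i ≤ l) :
    (cycProd θ p l i).1 = Rot (∑ k ∈ Finset.Icc 1 l, θ k) := by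
  have h1 := partial_fst θ p (l + 1 - i) i l rfl
  have h2 := partial_fst θ p (i - 1 + 1 - 1) 1 (i - 1) rfl
  simp only [cycProd, se2Mul, h1, h2, Rot_mul]
  congr 1
  have e1 : Finset.Icc i l = Finset.Ioc (i-1) l := by
    rw [← Finset.Icc_add_one_left_eq_Ioc]; congr 1; omega
  have e2 : Finset.Icc 1 (i-1) = Finset.Ioc 0 (i-1) := by
    rw [← Finset.Icc_add_one_left_eq_Ioc]; rfl
  have e3 : Finset.Icc 1 l = Finset.Ioc 0 l := by
    rw [← Finset.Icc_add_one_left_eq_Ioc]; rfl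
  rw [e1, e2, e3, add_comm, Finset.sum_Ioc_consecutive _ (by omega) (by omega)]

/-- for `1 ≤ i < j ≤ l`, the translation components of the cyclic products
satisfy `Δ^i = R_{i,j−1} Δ^j + (I − R_{1,l}) p_{i,j−1}`. -/
theorem cycProd_translation_relation (l : ℕ) (hl : 1 ≤ l) (θ : ℕ → ℝ) (p : ℕ → Fin 2 → ℝ)
    (i j : ℕ) (hi : 1 ≤ i) (hij : i < j) (hj : j ≤ l) :
    (cycProd θ p l i).2 =
      (partialProd θ p i (j - 1)).1.mulVec (cycProd θ p l j).2 +
        ((1 : Matrix (Fin 2) (Fin 2) ℝ) - Rot (∑ k ∈ Finset.Icc 1 l, θ k)).mulVec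
          (partialProd θ p i (j - 1)).2 := by
  set P := partialProd θ p i (j - 1) with hP
  have key : se2Mul P (cycProd θ p l j) = se2Mul (cycProd θ p l i) P := by
    unfold cycProd
    have s1 : partialProd θ p 1 (j - 1) =
        se2Mul (partialProd θ p 1 (i - 1)) (partialProd θ p i (j - 1)) := by
      have := partial_split θ p (i - 1 + 1 - 1) 1 (i - 1) (j - 1) rfl (by omega) (by omega)
      rwa [show i - 1 + 1 = i by omega] at this
    have s2 : partialProd θ p i l =
        se2Mul (partialProd θ p i (j - 1)) (partialProd θ p j l) := by
      have := partial_split θ p (j - 1 + 1 - i) i (j - 1) l rfl (by omega) (by omega)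
      rwa [show j - 1 + 1 = j by omega] at this
    rw [s1, s2]
    simp only [se2Mul_assoc]
    rfl
  have h2 := congrArg Prod.snd key
  have hR : (cycProd θ p l i).1 = Rot (∑ k ∈ Finset.Icc 1 l, θ k) :=
    cycProd_fst θ p l i hi (by omega)
  simp only [se2Mul, hR] at h2
  rw [Matrix.sub_mulVec, Matrix.one_mulVec]
  linear_combination -h2
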